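/- Let n ≥ 1, L ≥ 1, let X_1, …, X_L be n×n real symmetric matrices, and let α_1, …, α_L ∈ ℝ with m_j = dim ker(X_j − α_j I). If m_1 + ⋯ + m_L ≥ (L−1)·n + 1, then for every choice of k_1, …, k_L ∈ O(n), the number α_1 + ⋯ + α_L is an eigenvalue of k_1 X_1 k_1ᵀ + ⋯ + k_L X_L k_Lᵀ, i.e., ker(k_1 X_1 k_1ᵀ + ⋯ + k_L X_L k_Lᵀ − (α_1 + ⋯ + α_L) I) ≠ {0}. -/
import Mathlib

open Matrix

lemma inf_finrank_bound {K V : Type*} [Field K] [AddCommGroup V] [Module K V]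
    [FiniteDimensional K V] {ι : Type*} (S : ι → Submodule K V) (s : Finset ι) :
    (∑ i ∈ s, Module.finrank K (S i)) + Module.finrank K V ≤
      s.card * Module.finrank K V + Module.finrank K ↥(⨅ i ∈ s, S i) := by
  classical
  induction s using Finset.induction_on with
  | empty =>
      have h : (⨅ i ∈ (∅ : Finset ι), S i) = ⊤ := by simp
      rw [Finset.sum_empty, Finset.card_empty, zero_mul, zero_add, h,
        finrank_top]
      omega
  | @insert a s ha ih =>
      rw [Finset.sum_insert ha, Finset.card_insert_of_notMem ha, Finset.iInf_insert]
      have key := Submodule.finrank_sup_add_finrank_inf_eq (S a) (⨅ i ∈ s, S i)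
      have hsup : Module.finrank K ↥(S a ⊔ ⨅ i ∈ s, S i) ≤ Module.finrank K V :=
        Submodule.finrank_le _
      have hmul : (s.card + 1) * Module.finrank K V
          = s.card * Module.finrank K V + Module.finrank K V := by ring
      omega

lemma sum_mulVec' {n : ℕ} {ι : Type*} (s : Finset ι) (A : ι → Matrix (Fin n) (Fin n) ℝ)
    (v : Fin n → ℝ) : (∑ i ∈ s, A i) *ᵥ v = ∑ i ∈ s, A i *ᵥ v := by
  classical
  induction s using Finset.induction_on with
  | empty => simp
  | @insert a s ha ih => rw [Finset.sum_insert ha, Finset.sum_insert ha, add_mulVec, ih]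

theorem eigenvalue_of_sum_of_conjugates
    (n : ℕ) (hn : 1 ≤ n) (L : ℕ) (hL : 1 ≤ L)
    (X : Fin L → Matrix (Fin n) (Fin n) ℝ) (hX : ∀ i, (X i).IsSymm)
    (α : Fin L → ℝ)
    (hsum : (L - 1) * n + 1 ≤
      ∑ i, Module.finrank ℝ (LinearMap.ker (X i - α i • 1).mulVecLin))
    (k : Fin L → Matrix (Fin n) (Fin n) ℝ) (hk : ∀ i, (k i)ᵀ * k i = 1) :
    LinearMap.ker ((∑ i, k i * X i * (k i)ᵀ) - (∑ i, α i) • 1).mulVecLin ≠ ⊥ := by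
  classical
  have hk' : ∀ i, k i * (k i)ᵀ = 1 := fun i => mul_eq_one_comm.mpr (hk i)
  let e : Fin L → ((Fin n → ℝ) ≃ₗ[ℝ] (Fin n → ℝ)) := fun i =>
    LinearEquiv.ofLinear (k i).mulVecLin (k i)ᵀ.mulVecLin
      (by rw [← Matrix.mulVecLin_mul, hk' i, Matrix.mulVecLin_one])
      (by rw [← Matrix.mulVecLin_mul, hk i, Matrix.mulVecLin_one])
  set S : Fin L → Submodule ℝ (Fin n → ℝ) :=
    fun i => LinearMap.ker (k i * X i * (k i)ᵀ - α i • 1).mulVecLin with hS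
  have hfact : ∀ i, k i * X i * (k i)ᵀ - α i • 1 = k i * (X i - α i • 1) * (k i)ᵀ := by
    intro i
    rw [Matrix.mul_sub, Matrix.sub_mul, Matrix.mul_smul, Matrix.mul_one,
      Matrix.smul_mul, hk' i]
  have hmap : ∀ i, S i = Submodule.map (e i).toLinearMap
      (LinearMap.ker (X i - α i • 1).mulVecLin) := by
    intro i
    ext v
    simp only [hS, LinearMap.mem_ker, Submodule.mem_map, hfact i]
    constructor
    · intro hv
      have hv0 : (k i * (X i - α i • 1) * (k i)ᵀ) *ᵥ v = 0 := hv
      refine ⟨(k i)ᵀ *ᵥ v, ?_, ?_⟩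
      · show (X i - α i • 1) *ᵥ ((k i)ᵀ *ᵥ v) = 0
        have h2 : (k i)ᵀ *ᵥ ((k i * (X i - α i • 1) * (k i)ᵀ) *ᵥ v) = 0 := by
          rw [hv0, Matrix.mulVec_zero]
        rw [Matrix.mulVec_mulVec, ← Matrix.mul_assoc, ← Matrix.mul_assoc, hk i,
          Matrix.one_mul] at h2
        rw [Matrix.mulVec_mulVec]
        exact h2
      · show (k i) *ᵥ ((k i)ᵀ *ᵥ v) = v
        rw [Matrix.mulVec_mulVec, hk' i, Matrix.one_mulVec]
    · rintro ⟨w, hw, rfl⟩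
      have hw' : (X i - α i • 1) *ᵥ w = 0 := hw
      show (k i * (X i - α i • 1) * (k i)ᵀ) *ᵥ ((k i) *ᵥ w) = 0
      rw [Matrix.mulVec_mulVec, Matrix.mul_assoc (k i * (X i - α i • 1)), hk i,
        Matrix.mul_one, ← Matrix.mulVec_mulVec, hw', Matrix.mulVec_zero]
  have hdim : ∀ i, Module.finrank ℝ (S i)
      = Module.finrank ℝ (LinearMap.ker (X i - α i • 1).mulVecLin) := by
    intro i; rw [hmap i]; exact LinearEquiv.finrank_map_eq (e i) _
  have hbound := inf_finrank_bound S Finset.univ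
  rw [Finset.card_univ, Fintype.card_fin] at hbound
  have hrV : Module.finrank ℝ (Fin n → ℝ) = n := by simp
  rw [hrV] at hbound
  have hsum' : (L - 1) * n + 1 ≤ ∑ i, Module.finrank ℝ (S i) := by
    rw [Finset.sum_congr rfl (fun i _ => hdim i)]; exact hsum
  have hLn : (L - 1) * n = L * n - n := by rw [Nat.sub_mul, one_mul]
  have hnLn : n ≤ L * n := Nat.le_mul_of_pos_left n hL
  have hpos : 0 < Module.finrank ℝ ↥(⨅ i ∈ Finset.univ, S i) := by omega
  have hne : (⨅ i ∈ Finset.univ, S i) ≠ ⊥ := by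
    intro h
    rw [h] at hpos
    simp at hpos
  obtain ⟨v, hv, hv0⟩ := Submodule.exists_mem_ne_zero_of_ne_bot hne
  intro hker
  apply hv0
  have hv' : ∀ i, (k i * X i * (k i)ᵀ - α i • 1) *ᵥ v = 0 := by
    intro i
    have hmem := hv
    simp only [Submodule.mem_iInf, Finset.mem_univ, forall_true_left] at hmem
    exact hmem i
  have hzero : ((∑ i, k i * X i * (k i)ᵀ) - (∑ i, α i) • 1).mulVecLin v = 0 := by
    have heq : (∑ i, k i * X i * (k i)ᵀ) - (∑ i, α i) • 1
        = ∑ i, (k i * X i * (k i)ᵀ - α i • 1) := by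
      rw [Finset.sum_sub_distrib, ← Finset.sum_smul]
    rw [heq]
    show (∑ i, (k i * X i * (k i)ᵀ - α i • 1)) *ᵥ v = 0
    rw [sum_mulVec']
    exact Finset.sum_eq_zero fun i _ => hv' i
  have hmem' : v ∈ LinearMap.ker ((∑ i, k i * X i * (k i)ᵀ) - (∑ i, α i) • 1).mulVecLin :=
    hzero
  rw [hker] at hmem'
  simpa using hmem'
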